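/- Let X × X̄' be a normal topological space. If f₁, …, f_k : X → X' and g₁, …, g_k : X̄ → X̄' are continuous maps, then the higher homotopic distance of the product maps satisfies D(f₁ × g₁, …, f_k × g_k) ≤ D(f₁, …, f_k) + D(g₁, …, g_k). -/

import Mathlib

/-- The (higher) homotopic distance of a family of continuous maps `f i : X → Y`:
the least `l` such that `X` admits an open cover by `l` open sets on each of which
all the maps restrict to pairwise homotopic maps (`∞` if no such cover exists). -/
noncomputable def homDist {X Y : Type*} [TopologicalSpace X] [TopologicalSpace Y]
    {k : ℕ} (f : Fin k → C(X, Y)) : ℕ∞ :=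
  sInf ((fun n : ℕ => (n : ℕ∞)) '' {n : ℕ | ∃ U : Fin n → Set X,
    (∀ j, IsOpen (U j)) ∧ (⋃ j, U j) = Set.univ ∧
    ∀ j i i', ((f i).restrict (U j)).Homotopic ((f i').restrict (U j))})

/-- Homotopic distance of two maps. -/
noncomputable def homDist2 {X Y : Type*} [TopologicalSpace X] [TopologicalSpace Y]
    (f g : C(X, Y)) : ℕ∞ :=
  homDist ![f, g]

namespace HomDistAux

open Set ContinuousMap

variable {X Y : Type*} [TopologicalSpace X] [TopologicalSpace Y]

/-- The cover property appearing in the definition of `homDist`. -/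
def Cov {k : ℕ} (f : Fin k → C(X, Y)) (n : ℕ) : Prop :=
  ∃ U : Fin n → Set X,
    (∀ j, IsOpen (U j)) ∧ (⋃ j, U j) = Set.univ ∧
    ∀ j i i', ((f i).restrict (U j)).Homotopic ((f i').restrict (U j))

lemma homDist_eq {k : ℕ} (f : Fin k → C(X, Y)) :
    homDist f = sInf ((fun n : ℕ => (n : ℕ∞)) '' {n : ℕ | Cov f n}) := rfl

lemma homDist_le_of_cov {k : ℕ} {f : Fin k → C(X, Y)} {n : ℕ} (h : Cov f n) :
    homDist f ≤ (n : ℕ∞) := by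
  rw [homDist_eq]
  exact sInf_le ⟨n, h, rfl⟩

lemma exists_cov_of_ne_top {k : ℕ} {f : Fin k → C(X, Y)} (h : homDist f ≠ ⊤) :
    ∃ n : ℕ, homDist f = (n : ℕ∞) ∧ Cov f n := by
  have hne : {n : ℕ | Cov f n}.Nonempty := by
    by_contra hemp
    rw [Set.not_nonempty_iff_eq_empty] at hemp
    apply h
    rw [homDist_eq, hemp]
    simp
  refine ⟨sInf {n : ℕ | Cov f n}, ?_, Nat.sInf_mem hne⟩
  apply le_antisymm
  · rw [homDist_eq]
    exact sInf_le ⟨_, Nat.sInf_mem hne, rfl⟩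
  · rw [homDist_eq]
    apply le_sInf
    rintro x ⟨a, ha, rfl⟩
    show ((sInf {n : ℕ | Cov f n} : ℕ) : ℕ∞) ≤ (a : ℕ∞)
    exact_mod_cast Nat.sInf_le ha

lemma one_le_homDist {k : ℕ} {f : Fin k → C(X, Y)} [Nonempty X] :
    (1 : ℕ∞) ≤ homDist f := by
  rw [homDist_eq]
  apply le_sInf
  rintro x ⟨a, ha, rfl⟩
  rcases Nat.eq_zero_or_pos a with rfl | hpos
  · exfalso
    obtain ⟨U, -, hUc, -⟩ := ha
    have : (⋃ j : Fin 0, U j) = ∅ := Set.iUnion_of_empty U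
    rw [hUc] at this
    exact (Set.univ_nonempty).ne_empty this
  · show (1 : ℕ∞) ≤ (a : ℕ∞)
    exact_mod_cast hpos

lemma cov_zero_of_isEmpty {k : ℕ} (f : Fin k → C(X, Y)) [IsEmpty X] : Cov f 0 := by
  refine ⟨fun j => j.elim0, fun j => j.elim0, ?_, fun j => j.elim0⟩
  rw [Set.iUnion_of_empty, Set.univ_eq_empty_iff.mpr ‹IsEmpty X›]

lemma cov_one {k : ℕ} (f : Fin k → C(X, Y))
    (h : ∀ i i' : Fin k, ((f i).restrict (Set.univ : Set X)).Homotopic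
      ((f i').restrict Set.univ)) : Cov f 1 :=
  ⟨fun _ => Set.univ, fun _ => isOpen_univ, Set.iUnion_const _, fun _ i i' => h i i'⟩

/-- Restricting a homotopy to a smaller set. -/
lemma homotopic_restrict_mono {f g : C(X, Y)} {U W : Set X} (hWU : W ⊆ U)
    (h : (f.restrict U).Homotopic (g.restrict U)) :
    (f.restrict W).Homotopic (g.restrict W) := by
  obtain ⟨H⟩ := h
  refine ⟨⟨⟨fun p => H (p.1, Set.inclusion hWU p.2), ?_⟩, ?_, ?_⟩⟩
  · exact H.continuous.comp
      (continuous_fst.prodMk ((continuous_inclusion hWU).comp continuous_snd))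
  · intro x
    simpa using H.apply_zero (Set.inclusion hWU x)
  · intro x
    simpa using H.apply_one (Set.inclusion hWU x)

/-- Product of homotopies, restricted to a product set. -/
lemma homotopic_restrict_prod {X' Xb Xb' : Type*} [TopologicalSpace X'] [TopologicalSpace Xb]
    [TopologicalSpace Xb'] {f f' : C(X, X')} {g g' : C(Xb, Xb')} {U : Set X} {V : Set Xb}
    (hf : (f.restrict U).Homotopic (f'.restrict U))
    (hg : (g.restrict V).Homotopic (g'.restrict V)) :
    ((f.prodMap g).restrict (U ×ˢ V)).Homotopic ((f'.prodMap g').restrict (U ×ˢ V)) := by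
  obtain ⟨H⟩ := hf
  obtain ⟨K⟩ := hg
  refine ⟨⟨⟨fun p => (H (p.1, ⟨p.2.1.1, p.2.2.1⟩), K (p.1, ⟨p.2.1.2, p.2.2.2⟩)), ?_⟩, ?_, ?_⟩⟩
  · have c1 : Continuous fun p : ↑unitInterval × ↑(U ×ˢ V) => (p.2 : X × Xb) :=
      continuous_subtype_val.comp continuous_snd
    exact (H.continuous.comp (continuous_fst.prodMk
        ((c1.fst).subtype_mk _))).prodMk
      (K.continuous.comp (continuous_fst.prodMk ((c1.snd).subtype_mk _)))
  · intro x
    simp [H.apply_zero, K.apply_zero, Prod.map]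
  · intro x
    simp [H.apply_one, K.apply_one, Prod.map]

/-- Homotopies glue over pairwise disjoint open sets. -/
lemma homotopic_restrict_iUnion {ι : Type*} {f g : C(X, Y)} {P : ι → Set X}
    (hop : ∀ i, IsOpen (P i)) (hdis : Pairwise (Function.onFun Disjoint P))
    (h : ∀ i, (f.restrict (P i)).Homotopic (g.restrict (P i))) :
    (f.restrict (⋃ i, P i)).Homotopic (g.restrict (⋃ i, P i)) := by
  classical
  set W : Set X := ⋃ i, P i with hW
  have hPW : ∀ i, P i ⊆ W := fun i => Set.subset_iUnion P i
  have H : ∀ i, (f.restrict (P i)).Homotopy (g.restrict (P i)) := fun i => (h i).some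
  -- glue the homotopies on `I × ↥W`
  set S : ι → Set (↑unitInterval × ↥W) := fun i => {p | (p.2 : X) ∈ P i} with hS
  have hSop : ∀ i, IsOpen (S i) := fun i =>
    (hop i).preimage (continuous_subtype_val.comp continuous_snd)
  have hScov : ∀ p : ↑unitInterval × ↥W, ∃ i, S i ∈ nhds p := by
    intro p
    obtain ⟨i, hi⟩ := Set.mem_iUnion.mp p.2.2
    exact ⟨i, (hSop i).mem_nhds hi⟩
  set φ : ∀ i, C(S i, Y) := fun i =>
    (H i).toContinuousMap.comp
      ⟨fun q => (q.1.1, ⟨(q.1.2 : X), q.2⟩),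
        (continuous_fst.comp continuous_subtype_val).prodMk
          (((continuous_subtype_val.comp continuous_snd).comp
            continuous_subtype_val).subtype_mk _)⟩ with hφ
  have hcompat : ∀ (i j) (x : ↑unitInterval × ↥W) (hxi : x ∈ S i) (hxj : x ∈ S j),
      φ i ⟨x, hxi⟩ = φ j ⟨x, hxj⟩ := by
    intro i j x hxi hxj
    rcases eq_or_ne i j with rfl | hij
    · rfl
    · exact absurd hxj (Set.disjoint_left.mp (hdis hij) hxi)
  set L : C(↑unitInterval × ↥W, Y) := ContinuousMap.liftCover S φ hcompat hScov with hL
  refine ⟨⟨L, ?_, ?_⟩⟩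
  · intro x
    obtain ⟨i, hi⟩ := Set.mem_iUnion.mp x.2
    have h0 : ((0 : ↑unitInterval), x) ∈ S i := hi
    show L ((0 : ↑unitInterval), x) = (f.restrict W) x
    have h2 := ContinuousMap.liftCover_coe (hφ := hcompat) (hS := hScov)
      (⟨((0 : ↑unitInterval), x), h0⟩ : S i)
    have h3 : φ i ⟨((0 : ↑unitInterval), x), h0⟩ = f x := by
      simpa [hφ] using (H i).apply_zero (⟨(x : X), hi⟩ : P i)
    exact h2.trans h3
  · intro x
    obtain ⟨i, hi⟩ := Set.mem_iUnion.mp x.2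
    have h1 : ((1 : ↑unitInterval), x) ∈ S i := hi
    show L ((1 : ↑unitInterval), x) = (g.restrict W) x
    have h2 := ContinuousMap.liftCover_coe (hφ := hcompat) (hS := hScov)
      (⟨((1 : ↑unitInterval), x), h1⟩ : S i)
    have h3 : φ i ⟨((1 : ↑unitInterval), x), h1⟩ = g x := by
      simpa [hφ] using (H i).apply_one (⟨(x : X), hi⟩ : P i)
    exact h2.trans h3

/-- A factor of a normal space is normal, provided the other factor is nonempty. -/
lemma normalSpace_left {Z W : Type*} [TopologicalSpace Z] [TopologicalSpace W]
    [NormalSpace (Z × W)] [Nonempty W] : NormalSpace Z := by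
  constructor
  intro s t hs ht hd
  obtain ⟨u, v, hu, hv, hsu, htv, huv⟩ :=
    NormalSpace.normal (s ×ˢ (Set.univ : Set W)) (t ×ˢ Set.univ)
      (hs.prod isClosed_univ) (ht.prod isClosed_univ)
      (Set.disjoint_left.mpr fun p hp hp' => Set.disjoint_left.mp hd hp.1 hp'.1)
  obtain ⟨w⟩ := (inferInstance : Nonempty W)
  have hcw : Continuous fun z : Z => (z, w) := continuous_id.prodMk continuous_const
  refine ⟨(fun z => (z, w)) ⁻¹' u, (fun z => (z, w)) ⁻¹' v, hu.preimage hcw, hv.preimage hcw,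
    fun z hz => hsu ⟨hz, trivial⟩, fun z hz => htv ⟨hz, trivial⟩, ?_⟩
  exact Set.disjoint_left.mpr fun z hz hz' => Set.disjoint_left.mp huv hz hz'

/-- A family of Urysohn functions subordinate to a finite open cover of a normal space. -/
lemma exists_pou [NormalSpace X] {n : ℕ} {U : Fin n → Set X}
    (hUo : ∀ a, IsOpen (U a)) (hUc : (⋃ a, U a) = Set.univ) :
    ∃ φ : Fin n → C(X, ℝ), (∀ a x, φ a x ∈ Set.Icc (0 : ℝ) 1) ∧
      (∀ a x, x ∉ U a → φ a x = 0) ∧ (∀ x, ∃ a, φ a x = 1) := by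
  obtain ⟨v, hvcov, hvo, hvcl⟩ := exists_subset_iUnion_closure_subset isClosed_univ hUo
    (fun x _ => Set.toFinite _) (by rw [hUc])
  have h1 : ∀ a, ∃ φa : C(X, ℝ), Set.EqOn φa 0 (U a)ᶜ ∧ Set.EqOn φa 1 (closure (v a)) ∧
      ∀ x, φa x ∈ Set.Icc (0 : ℝ) 1 :=
    fun a => exists_continuous_zero_one_of_isClosed (hUo a).isClosed_compl isClosed_closure
      (Set.disjoint_left.mpr fun x hx hx' => hx (hvcl a hx'))
  choose φ h0 h1' h01 using h1
  refine ⟨φ, fun a => h01 a, fun a x hx => by simpa using h0 a hx, fun x => ?_⟩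
  obtain ⟨a, ha⟩ := Set.mem_iUnion.mp (hvcov (Set.mem_univ x))
  exact ⟨a, by simpa using h1' a (subset_closure ha)⟩

/-- The key construction: covers of size `n` and `m` give a cover of size `n + m`
for the product maps, assuming the first factor is normal. -/
lemma key_cov {X X' Xb Xb' : Type*} [TopologicalSpace X] [TopologicalSpace X']
    [TopologicalSpace Xb] [TopologicalSpace Xb'] [NormalSpace X] {k n m : ℕ}
    {f : Fin k → C(X, X')} {g : Fin k → C(Xb, Xb')}
    (hf : Cov f n) (hg : Cov g m) : Cov (fun i => (f i).prodMap (g i)) (n + m) := by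
  classical
  obtain ⟨U, hUo, hUc, hUh⟩ := hf
  obtain ⟨V, hVo, hVc, hVh⟩ := hg
  obtain ⟨φ, hφ01, hφ0, hφ1⟩ := exists_pou hUo hUc
  set t : Fin m → ℝ := fun b => (2 * (b : ℕ) + 2) / (2 * m + 2) with ht
  set lo : Fin m → ℝ := fun b => (2 * (b : ℕ) + 1) / (2 * m + 2) with hlo
  set hi : Fin m → ℝ := fun b => (2 * (b : ℕ) + 3) / (2 * m + 2) with hhi
  have hden : (0 : ℝ) < 2 * m + 2 := by positivity
  have hlot : ∀ b, lo b < t b := fun b => by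
    rw [hlo, ht]; exact (div_lt_div_iff_of_pos_right hden).mpr (by norm_num)
  have hthi : ∀ b, t b < hi b := fun b => by
    rw [ht, hhi]; exact (div_lt_div_iff_of_pos_right hden).mpr (by norm_num)
  have hlopos : ∀ b, (0 : ℝ) < lo b := fun b => by rw [hlo]; positivity
  have htpos : ∀ b, (0 : ℝ) < t b := fun b => by rw [ht]; positivity
  have ht1 : ∀ b, t b < 1 := fun b => by
    rw [ht]
    rw [div_lt_one hden]
    have hb : ((b : ℕ) : ℝ) < (m : ℝ) := by exact_mod_cast b.isLt
    linarith
  have hband : ∀ b b' : Fin m, b < b' → hi b ≤ lo b' := fun b b' hbb => by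
    rw [hhi, hlo]
    apply (div_le_div_iff_of_pos_right hden).mpr
    have hb : ((b : ℕ) : ℝ) + 1 ≤ ((b' : ℕ) : ℝ) := by exact_mod_cast hbb
    linarith
  set A : Fin n → Fin m → Set X := fun a b => (φ a) ⁻¹' Set.Ioo (lo b) (hi b) with hA
  set D : Fin n → Fin m → Set X := fun a b =>
    (φ a) ⁻¹' Set.Ioi (t b) ∩ ⋂ (a' : Fin n) (_ : a' < a), (φ a') ⁻¹' Set.Iio (t b) with hD
  have hAo : ∀ a b, IsOpen (A a b) := fun a b =>
    isOpen_Ioo.preimage (φ a).continuous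
  have hDo : ∀ a b, IsOpen (D a b) := fun a b =>
    (isOpen_Ioi.preimage (φ a).continuous).inter
      (isOpen_iInter_of_finite fun a' => isOpen_iInter_of_finite fun _ =>
        isOpen_Iio.preimage (φ a').continuous)
  have hAU : ∀ a b, A a b ⊆ U a := by
    intro a b x hx
    by_contra hxU
    have h0 := hφ0 a x hxU
    have : lo b < φ a x := hx.1
    rw [h0] at this
    exact absurd this (not_lt.mpr (hlopos b).le)
  have hDU : ∀ a b, D a b ⊆ U a := by
    intro a b x hx
    by_contra hxU
    have h0 := hφ0 a x hxU
    have : t b < φ a x := hx.1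
    rw [h0] at this
    exact absurd this (not_lt.mpr (htpos b).le)
  have hAdis : ∀ a, ∀ b b' : Fin m, b ≠ b' → ∀ x, x ∈ A a b → x ∈ A a b' → False := by
    intro a b b' hbb x hx hx'
    rcases lt_or_gt_of_ne hbb with h | h
    · exact absurd (lt_of_lt_of_le hx.2 (hband _ _ h)) (not_lt.mpr hx'.1.le)
    · exact absurd (lt_of_lt_of_le hx'.2 (hband _ _ h)) (not_lt.mpr hx.1.le)
  have hDdis : ∀ b, ∀ a a' : Fin n, a ≠ a' → ∀ x, x ∈ D a b → x ∈ D a' b → False := by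
    intro b a a' haa x hx hx'
    rcases lt_or_gt_of_ne haa with h | h
    · have h2 : φ a x < t b := Set.mem_iInter₂.mp hx'.2 a h
      have h1 : t b < φ a x := hx.1
      exact absurd h1 (not_lt.mpr h2.le)
    · have h2 : φ a' x < t b := Set.mem_iInter₂.mp hx.2 a' h
      have h1 : t b < φ a' x := hx'.1
      exact absurd h1 (not_lt.mpr h2.le)
  set W : Fin n ⊕ Fin m → Set (X × Xb) := fun s =>
    Sum.rec (fun a => ⋃ b, A a b ×ˢ V b) (fun b => (⋃ a, D a b) ×ˢ V b) s with hWdef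
  have hWo : ∀ s, IsOpen (W s) := by
    rintro (a | b)
    · exact isOpen_iUnion fun b => (hAo a b).prod (hVo b)
    · exact (isOpen_iUnion fun a => hDo a b).prod (hVo b)
  have hWcov : ∀ p : X × Xb, ∃ s, p ∈ W s := by
    rintro ⟨x, y⟩
    have hy : y ∈ ⋃ b, V b := by rw [hVc]; trivial
    obtain ⟨b, hb⟩ := Set.mem_iUnion.mp hy
    by_cases hA' : ∃ a, x ∈ A a b
    · obtain ⟨a, ha⟩ := hA'
      exact ⟨Sum.inl a, Set.mem_iUnion.mpr ⟨b, ⟨ha, hb⟩⟩⟩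
    · push_neg at hA'
      have hex : ∃ a, t b < φ a x := by
        obtain ⟨a, ha⟩ := hφ1 x
        exact ⟨a, by rw [ha]; exact ht1 b⟩
      set sF : Finset (Fin n) := Finset.univ.filter (fun a => t b < φ a x) with hsF
      have hsne : sF.Nonempty := by
        obtain ⟨a, ha⟩ := hex
        exact ⟨a, Finset.mem_filter.mpr ⟨Finset.mem_univ _, ha⟩⟩
      set a0 := sF.min' hsne with ha0def
      have ha0 : t b < φ a0 x := (Finset.mem_filter.mp (sF.min'_mem hsne)).2
      have hmin : ∀ a' : Fin n, a' < a0 → φ a' x < t b := by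
        intro a' ha'
        have h1 : ¬ t b < φ a' x := by
          intro hlt'
          exact absurd (sF.min'_le a' (Finset.mem_filter.mpr ⟨Finset.mem_univ _, hlt'⟩))
            (not_le.mpr ha')
        have h2 : φ a' x ≠ t b := by
          intro heq
          exact hA' a' (by rw [hA]; exact Set.mem_preimage.mpr ⟨heq ▸ hlot b, heq ▸ hthi b⟩)
        exact lt_of_le_of_ne (not_lt.mp h1) h2
      refine ⟨Sum.inr b, ⟨Set.mem_iUnion.mpr ⟨a0, ⟨ha0, ?_⟩⟩, hb⟩⟩
      exact Set.mem_iInter₂.mpr fun a' h => hmin a' h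
  have hWhom : ∀ s i i', (((f i).prodMap (g i)).restrict (W s)).Homotopic
      (((f i').prodMap (g i')).restrict (W s)) := by
    intro s i i'
    cases s with
    | inl a =>
      apply homotopic_restrict_iUnion (P := fun b => A a b ×ˢ V b)
        (fun b => (hAo a b).prod (hVo b))
      · intro b b' hbb
        exact Set.disjoint_left.mpr fun p hp hp' => hAdis a b b' hbb p.1 hp.1 hp'.1
      · intro b
        exact homotopic_restrict_mono (Set.prod_mono (hAU a b) Set.Subset.rfl)
          (homotopic_restrict_prod (hUh a i i') (hVh b i i'))
    | inr b =>
      have heq : W (Sum.inr b) = ⋃ a, D a b ×ˢ V b := Set.iUnion_prod_const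
      rw [heq]
      apply homotopic_restrict_iUnion (P := fun a => D a b ×ˢ V b)
        (fun a => (hDo a b).prod (hVo b))
      · intro a a' haa
        exact Set.disjoint_left.mpr fun p hp hp' => hDdis b a a' haa p.1 hp.1 hp'.1
      · intro a
        exact homotopic_restrict_mono (Set.prod_mono (hDU a b) Set.Subset.rfl)
          (homotopic_restrict_prod (hUh a i i') (hVh b i i'))
  refine ⟨fun j => W (finSumFinEquiv.symm j), fun j => hWo _, ?_, fun j i i' => hWhom _ i i'⟩
  rw [Function.Surjective.iUnion_comp (Equiv.surjective _) W]
  exact Set.iUnion_eq_univ_iff.mpr fun p => hWcov p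

end HomDistAux

theorem homDist_prodMap_le {X X' Xb Xb' : Type*} [TopologicalSpace X] [TopologicalSpace X']
    [TopologicalSpace Xb] [TopologicalSpace Xb'] [NormalSpace (X × Xb')] {k : ℕ}
    (f : Fin k → C(X, X')) (g : Fin k → C(Xb, Xb')) :
    homDist (fun i => (f i).prodMap (g i)) ≤ homDist f + homDist g := by
  classical
  by_cases hne : Nonempty (X × Xb)
  · have hX : Nonempty X := ⟨(Classical.choice hne).1⟩
    have hXb : Nonempty Xb := ⟨(Classical.choice hne).2⟩
    rcases Nat.eq_zero_or_pos k with rfl | hk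
    · -- no maps at all: the trivial cover works
      have h1 : homDist (fun i => (f i).prodMap (g i)) ≤ ((1 : ℕ) : ℕ∞) :=
        HomDistAux.homDist_le_of_cov (HomDistAux.cov_one _ (fun i _ => i.elim0))
      have h2 : ((1 : ℕ) : ℕ∞) ≤ homDist f := by
        simpa using (HomDistAux.one_le_homDist (f := f))
      exact h1.trans (h2.trans le_self_add)
    · have hXb' : Nonempty Xb' := ⟨g ⟨0, hk⟩ (Classical.choice hXb)⟩
      have hNX : NormalSpace X := HomDistAux.normalSpace_left (W := Xb')
      by_cases hft : homDist f = ⊤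
      · rw [hft, top_add]; exact le_top
      by_cases hgt : homDist g = ⊤
      · rw [hgt, add_top]; exact le_top
      obtain ⟨n, hfn, hcn⟩ := HomDistAux.exists_cov_of_ne_top hft
      obtain ⟨m, hgm, hcm⟩ := HomDistAux.exists_cov_of_ne_top hgt
      have hle := HomDistAux.homDist_le_of_cov (HomDistAux.key_cov hcn hcm)
      rw [hfn, hgm]
      exact hle.trans_eq (by push_cast; rfl)
  · have hemp : IsEmpty (X × Xb) := not_nonempty_iff.mp hne
    have h0 := HomDistAux.homDist_le_of_cov
      (HomDistAux.cov_zero_of_isEmpty (fun i => (f i).prodMap (g i)))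
    exact le_trans (by simpa using h0) zero_le
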